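/- arXiv:0712.3175 — 2 statements merged into one kernel-verified Lean document; each statement's English description precedes it below -/
import Mathlib

section
/- Let x ∈ G have order n, and let i, j, k be positive integers with gcd(i,n) = gcd(j,n) = 1 and ik ≡ 1 (mod n). Then u = (1 + x^j + ... + x^{j(i-1)})(1 + x^i + ... + x^{i(k-1)}) + ((1 - ik)/n)·x̂ is a unit of ZG, where x̂ = 1 + x + ... + x^{n-1}. -/
/-- The canonical involution on the group ring `K[G]`, sending `∑ a_g g` to `∑ a_g g⁻¹`. -/
noncomputable def gstar {K G : Type*} [CommRing K] [Group G] (x : MonoidAlgebra K G) :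
    MonoidAlgebra K G := MonoidAlgebra.ofCoeff (Finsupp.mapDomain (fun g => g⁻¹) x.coeff)

/-- `x̂ = 1 + x + ⋯ + x^(n-1)` in the integral group ring, where `n = orderOf x`. -/
noncomputable def hatZ {G : Type*} [Group G] (x : G) : MonoidAlgebra ℤ G :=
  ∑ i ∈ Finset.range (orderOf x), (MonoidAlgebra.of ℤ G x) ^ i

section aux

variable {R : Type*} [Ring R] (y : R)

private lemma geom_comp (a m m' : ℕ) :
    (∑ r ∈ Finset.range m, y ^ (a * r)) * (∑ s ∈ Finset.range m', y ^ (a * m * s)) =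
      ∑ r ∈ Finset.range (m * m'), y ^ (a * r) := by
  induction m' with
  | zero => simp
  | succ q ih =>
    rw [Finset.sum_range_succ, mul_add, ih, Nat.mul_succ, Finset.sum_range_add,
      Finset.sum_mul]
    congr 1
    refine Finset.sum_congr rfl fun r _ => ?_
    rw [← pow_add]
    congr 1
    ring

variable (n : ℕ) (hy : y ^ n = 1)
include hy

private lemma shift_sum : ∑ r ∈ Finset.range n, y ^ (r + 1) = ∑ r ∈ Finset.range n, y ^ r := by
  have h1 := Finset.sum_range_succ (fun r => y ^ r) n
  have h2 := Finset.sum_range_succ' (fun r => y ^ r) n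
  simp only [pow_zero] at h1 h2
  rw [h1, hy] at h2
  exact add_right_cancel h2.symm

private lemma pow_mul_sigma (t : ℕ) :
    y ^ t * (∑ r ∈ Finset.range n, y ^ r) = ∑ r ∈ Finset.range n, y ^ r := by
  induction t with
  | zero => simp
  | succ q ih =>
    rw [pow_succ', mul_assoc, ih]
    rw [show y * (∑ r ∈ Finset.range n, y ^ r) = ∑ r ∈ Finset.range n, y ^ (r + 1) by
      rw [Finset.mul_sum]; exact Finset.sum_congr rfl fun r _ => (pow_succ' y r).symm,
      shift_sum y n hy]

private lemma sigma_mul_pow (t : ℕ) :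
    (∑ r ∈ Finset.range n, y ^ r) * y ^ t = ∑ r ∈ Finset.range n, y ^ r := by
  induction t with
  | zero => simp
  | succ q ih =>
    rw [pow_succ, ← mul_assoc, ih]
    rw [show (∑ r ∈ Finset.range n, y ^ r) * y = ∑ r ∈ Finset.range n, y ^ (r + 1) by
      rw [Finset.sum_mul]; exact Finset.sum_congr rfl fun r _ => (pow_succ y r).symm,
      shift_sum y n hy]

private lemma S_mul_sigma (f : ℕ → ℕ) (m : ℕ) :
    (∑ r ∈ Finset.range m, y ^ (f r)) * (∑ r ∈ Finset.range n, y ^ r)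
      = (m : ℤ) • ∑ r ∈ Finset.range n, y ^ r := by
  rw [Finset.sum_mul]
  rw [Finset.sum_congr rfl fun r _ => pow_mul_sigma y n hy (f r)]
  simp [natCast_zsmul]

private lemma sigma_mul_S (f : ℕ → ℕ) (m : ℕ) :
    (∑ r ∈ Finset.range n, y ^ r) * (∑ r ∈ Finset.range m, y ^ (f r))
      = (m : ℤ) • ∑ r ∈ Finset.range n, y ^ r := by
  rw [Finset.mul_sum]
  rw [Finset.sum_congr rfl fun r _ => sigma_mul_pow y n hy (f r)]
  simp [natCast_zsmul]

private lemma split_sum (m q : ℕ) :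
    ∑ r ∈ Finset.range (m + n * q), y ^ r
      = (∑ r ∈ Finset.range m, y ^ r) + (q : ℤ) • ∑ r ∈ Finset.range n, y ^ r := by
  induction q with
  | zero => simp
  | succ q ih =>
    rw [Nat.mul_succ, ← add_assoc, Finset.sum_range_add, ih]
    have : ∑ s ∈ Finset.range n, y ^ (m + n * q + s)
        = ∑ r ∈ Finset.range n, y ^ r := by
      rw [Finset.sum_congr rfl fun s _ => pow_add y (m + n * q) s]
      rw [← Finset.mul_sum, pow_mul_sigma y n hy]
    rw [this]
    push_cast
    rw [add_smul, one_smul]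
    abel

omit hy

private lemma pows_commute (f g : ℕ → ℕ) (s t : Finset ℕ) :
    Commute (∑ r ∈ s, y ^ f r) (∑ r ∈ t, y ^ g r) := by
  refine Commute.sum_left _ _ _ fun r _ => ?_
  exact Commute.sum_right _ _ _ fun q _ => (Commute.refl y).pow_pow _ _

end aux

/-- The Hochsmann unit: for x of order n and i, j, k with gcd(i,n) = gcd(j,n) = 1 and
ik ≡ 1 (mod n), say 1 - ik = n·c, the element
(1 + x^j + ⋯ + x^(j(i-1)))(1 + x^i + ⋯ + x^(i(k-1))) + c·x̂ is a unit of ℤG. -/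
theorem stmt_10 {G : Type*} [Group G] (x : G) (n : ℕ) (hn : orderOf x = n) (hn0 : 0 < n)
    (i j k : ℕ) (hi : 0 < i) (hj : 0 < j) (hk : 0 < k)
    (hgi : Nat.gcd i n = 1) (hgj : Nat.gcd j n = 1)
    (c : ℤ) (hc : 1 - (i * k : ℤ) = n * c) :
    IsUnit ((∑ r ∈ Finset.range i, MonoidAlgebra.of ℤ G x ^ (j * r)) *
        (∑ r ∈ Finset.range k, MonoidAlgebra.of ℤ G x ^ (i * r)) +
      c • hatZ x) := by
  set y : MonoidAlgebra ℤ G := MonoidAlgebra.of ℤ G x with hy_def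
  have hy : y ^ n = 1 := by
    rw [hy_def, ← map_pow, ← hn, pow_orderOf_eq_one, map_one]
  have hhat : hatZ x = ∑ r ∈ Finset.range n, y ^ r := by
    rw [hatZ, hn]
  rw [hhat]
  set σ : MonoidAlgebra ℤ G := ∑ r ∈ Finset.range n, y ^ r with hσ_def
  -- find j' with j * j' = 1 + n * e
  have htot : 0 < Nat.totient n := Nat.totient_pos.mpr hn0
  set j' : ℕ := j ^ (Nat.totient n - 1) with hj'_def
  have hj'pos : 0 < j' := pow_pos hj _
  have hjj'tot : j * j' = j ^ Nat.totient n := by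
    rw [hj'_def, ← pow_succ']
    congr 1
    omega
  have hmod : j * j' ≡ 1 [MOD n] := hjj'tot ▸ Nat.ModEq.pow_totient hgj
  have hjj'pos : 1 ≤ j * j' := Nat.mul_pos hj hj'pos
  obtain ⟨e, he⟩ : ∃ e, j * j' = 1 + n * e := by
    obtain ⟨e, he⟩ := (Nat.modEq_iff_dvd' hjj'pos).mp hmod.symm
    exact ⟨e, by omega⟩
  -- p with c = -p and i*k = 1 + n*p
  have hik1 : 1 ≤ i * k := Nat.mul_pos hi hk
  obtain ⟨p, hp, hik⟩ : ∃ p : ℕ, c = -(p : ℤ) ∧ i * k = 1 + n * p := by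
    have hik1' : (1 : ℤ) ≤ (i : ℤ) * k := by exact_mod_cast hik1
    have hn0' : (0 : ℤ) < n := by exact_mod_cast hn0
    have hc0 : c ≤ 0 := by nlinarith
    refine ⟨(-c).toNat, by omega, ?_⟩
    have h2 : ((i * k : ℕ) : ℤ) = ((1 + n * (-c).toNat : ℕ) : ℤ) := by
      push_cast
      rw [Int.toNat_of_nonneg (by omega)]
      linarith
    exact_mod_cast h2
  set A : MonoidAlgebra ℤ G := ∑ r ∈ Finset.range i, y ^ (j * r) with hA_def
  set B : MonoidAlgebra ℤ G := ∑ r ∈ Finset.range k, y ^ (i * r) with hB_def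
  set C : MonoidAlgebra ℤ G := ∑ r ∈ Finset.range j', y ^ (j * i * r) with hC_def
  set D : MonoidAlgebra ℤ G := ∑ r ∈ Finset.range j, y ^ r with hD_def
  set v : MonoidAlgebra ℤ G := C * D - (e : ℤ) • σ with hv_def
  -- commutation facts
  have hcom : ∀ (f g : ℕ → ℕ) (s t : Finset ℕ),
      Commute (∑ r ∈ s, y ^ f r) (∑ r ∈ t, y ^ g r) := fun f g s t => pows_commute y f g s t
  have hBC : Commute B C := hcom (fun r => i * r) (fun r => j * i * r) _ _
  have hBD : Commute B D := hcom (fun r => i * r) (fun r => r) _ _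
  have hAD : Commute A D := hcom (fun r => j * r) (fun r => r) _ _
  have hCD : Commute C D := hcom (fun r => j * i * r) (fun r => r) _ _
  have hAC' : Commute A C := hcom (fun r => j * r) (fun r => j * i * r) _ _
  have hAσ : Commute A σ := hcom (fun r => j * r) (fun r => r) _ _
  have hBσ : Commute B σ := hcom (fun r => i * r) (fun r => r) _ _
  have hCσ : Commute C σ := hcom (fun r => j * i * r) (fun r => r) _ _
  have hDσ : Commute D σ := hcom (fun r => r) (fun r => r) _ _
  -- main rearrangement
  have hre : (A * B) * (C * D) = (D * (A * C)) * B := by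
    rw [hBC.mul_mul_mul_comm, hBD.eq, ← mul_assoc, (hAD.mul_left hCD).eq]
  -- compositions
  have hAC : A * C = ∑ r ∈ Finset.range (i * j'), y ^ (j * r) := geom_comp y j i j'
  have hDAC : D * (A * C) = ∑ r ∈ Finset.range (j * (i * j')), y ^ r := by
    have h := geom_comp y 1 j (i * j')
    simp only [one_mul] at h
    rw [hAC, hD_def, h]
  have harith : j * (i * j') = i + n * (i * e) := by
    have h1 : j * (i * j') = i * (j * j') := by ring
    rw [h1, he]
    ring
  have hT : D * (A * C) = (∑ r ∈ Finset.range i, y ^ r) + ((i * e : ℕ) : ℤ) • σ := by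
    rw [hDAC, harith, split_sum y n hy]
  have hcomp2 : (∑ r ∈ Finset.range i, y ^ r) * B = ∑ r ∈ Finset.range (i * k), y ^ r := by
    have h := geom_comp y 1 i k
    simp only [one_mul] at h
    rw [hB_def, h]
  have hM : (D * (A * C)) * B = 1 + (p : ℤ) • σ + ((i * e : ℕ) : ℤ) • ((k : ℤ) • σ) := by
    rw [hT, add_mul, hcomp2, hik, split_sum y n hy, smul_mul_assoc,
      hB_def, sigma_mul_S y n hy (fun r => i * r) k]
    simp [add_assoc]
    rfl
  -- absorption facts
  have hABσ' : (A * B) * σ = ((k : ℤ) • ((i : ℤ) • σ)) := by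
    rw [mul_assoc, hB_def, S_mul_sigma y n hy (fun r => i * r) k, mul_smul_comm,
      hA_def, S_mul_sigma y n hy (fun r => j * r) i]
  have hσCD : σ * (C * D) = ((j' : ℤ) • ((j : ℤ) • σ)) := by
    rw [← mul_assoc, hC_def, sigma_mul_S y n hy (fun r => j * i * r) j',
      smul_mul_assoc]
    congr 1
    have h := sigma_mul_S y n hy (fun r => r) j
    rw [hD_def]
    simpa using h
  have hσσ : σ * σ = (n : ℤ) • σ := by
    have h := sigma_mul_S y n hy (fun r => r) n
    simpa using h
  -- the key identity
  have huv : (A * B + c • σ) * v = 1 := by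
    rw [hv_def, add_mul, mul_sub, mul_sub, mul_smul_comm, smul_mul_assoc, smul_mul_assoc,
      mul_smul_comm, hre, hM, hABσ', hσCD, hσσ]
    have hejj : (j : ℤ) * (j' : ℤ) = 1 + (n : ℤ) * (e : ℤ) := by exact_mod_cast he
    rw [hp]
    push_cast
    match_scalars
    · ring
    · linear_combination (-(p : ℤ)) * hejj
  -- commutation of u with v
  have hcuv : Commute (A * B + c • σ) v := by
    have h1 : Commute (A * B) (C * D) := (hAC'.mul_left hBC).mul_right (hAD.mul_left hBD)
    have h2 : Commute (A * B) σ := hAσ.mul_left hBσ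
    have h3 : Commute σ (C * D) := (hCσ.symm).mul_right (hDσ.symm)
    have h4 : Commute (A * B + c • σ) (C * D) := h1.add_left (h3.smul_left c)
    have h5 : Commute (A * B + c • σ) ((e : ℤ) • σ) :=
      (h2.add_left ((Commute.refl σ).smul_left c)).smul_right (e : ℤ)
    exact h4.sub_right h5
  have hvu : v * (A * B + c • σ) = 1 := by rw [← hcuv.eq]; exact huv
  exact ⟨⟨A * B + c • σ, v, huv, hvu⟩, rfl⟩
end

section
/- Let G be a group such that S_*(ZG) is a subgroup of U(ZG). Then every finite cyclic subgroup of G is normal in G. -/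
section gstarlemmas
variable {K G : Type*} [CommRing K] [Group G]

open MonoidAlgebra

lemma gstar_single (g : G) (r : K) : gstar (single g r : MonoidAlgebra K G) = single g⁻¹ r :=
  congrArg MonoidAlgebra.ofCoeff Finsupp.mapDomain_single

lemma gstar_add (a b : MonoidAlgebra K G) : gstar (a + b) = gstar a + gstar b :=
  congrArg MonoidAlgebra.ofCoeff Finsupp.mapDomain_add

lemma gstar_zero : gstar (0 : MonoidAlgebra K G) = 0 := congrArg MonoidAlgebra.ofCoeff Finsupp.mapDomain_zero

lemma gstar_sub (a b : MonoidAlgebra K G) : gstar (a - b) = gstar a - gstar b := by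
  exact congrArg MonoidAlgebra.ofCoeff ((Finsupp.mapDomain.addMonoidHom (M := K) (fun g : G => g⁻¹)).map_sub a.coeff b.coeff)

lemma gstar_one : gstar (1 : MonoidAlgebra K G) = 1 := by
  rw [MonoidAlgebra.one_def, gstar_single, inv_one]

lemma gstar_mul (a b : MonoidAlgebra K G) : gstar (a * b) = gstar b * gstar a := by
  induction a using MonoidAlgebra.induction_linear with
  | zero => simp [gstar_zero]
  | add f g hf hg => rw [add_mul, gstar_add, hf, hg, gstar_add, mul_add]
  | single ga ra =>
    induction b using MonoidAlgebra.induction_linear with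
    | zero => simp [gstar_zero]
    | add f g hf hg => rw [mul_add, gstar_add, hf, hg, gstar_add, add_mul]
    | single gb rb =>
      rw [MonoidAlgebra.single_mul_single, gstar_single, gstar_single, gstar_single,
        MonoidAlgebra.single_mul_single, mul_inv_rev, mul_comm rb ra]

lemma gstar_gstar (a : MonoidAlgebra K G) : gstar (gstar a) = a := by
  unfold gstar
  rw [MonoidAlgebra.coeff_ofCoeff, ← Finsupp.mapDomain_comp]
  simp [Function.comp_def]

lemma gstar_smul (n : K) (a : MonoidAlgebra K G) : gstar (n • a) = n • gstar a :=
  congrArg MonoidAlgebra.ofCoeff (Finsupp.mapDomain_smul n a.coeff)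

end gstarlemmas

section hat
variable {G : Type*} [Group G] (x : G)
open MonoidAlgebra Finset

lemma X_pow_order : (MonoidAlgebra.of ℤ G x) ^ (orderOf x) = 1 := by
  rw [← map_pow, pow_orderOf_eq_one, map_one]

lemma hat_mul_of : hatZ x * MonoidAlgebra.of ℤ G x = hatZ x := by
  have h2 := geom_sum_mul (MonoidAlgebra.of ℤ G x) (orderOf x)
  rw [X_pow_order, sub_self] at h2
  have : hatZ x * (MonoidAlgebra.of ℤ G x - 1) = 0 := h2
  rw [mul_sub, mul_one, sub_eq_zero] at this
  exact this

lemma X_comm_hat : Commute (MonoidAlgebra.of ℤ G x) (hatZ x) := by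
  exact Commute.sum_right _ _ _ (fun i _ => (Commute.refl _).pow_right i)

lemma X_mul_hat : MonoidAlgebra.of ℤ G x * hatZ x = hatZ x := by
  rw [X_comm_hat x, hat_mul_of]

lemma Xpow_mul_hat (i : ℕ) : (MonoidAlgebra.of ℤ G x) ^ i * hatZ x = hatZ x := by
  induction i with
  | zero => simp
  | succ n ih => rw [pow_succ, mul_assoc, X_mul_hat, ih]

lemma hat_mul_hat : hatZ x * hatZ x = (orderOf x : MonoidAlgebra ℤ G) * hatZ x := by
  nth_rewrite 1 [hatZ]
  rw [Finset.sum_mul]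
  have : ∀ i ∈ Finset.range (orderOf x),
      (MonoidAlgebra.of ℤ G x) ^ i * hatZ x = hatZ x := fun i _ => Xpow_mul_hat x i
  rw [Finset.sum_congr rfl this, Finset.sum_const, Finset.card_range, nsmul_eq_mul]

lemma hat_eq_sum_single :
    hatZ x = ∑ i ∈ Finset.range (orderOf x), MonoidAlgebra.single (x ^ i) (1 : ℤ) := by
  unfold hatZ
  refine Finset.sum_congr rfl fun i _ => ?_
  rw [← map_pow, MonoidAlgebra.of_apply]
end hat

lemma hat_mul_X' {G : Type*} [Group G] (x : G) :
    hatZ x * MonoidAlgebra.single x (1:ℤ) = hatZ x := by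
  rw [← MonoidAlgebra.of_apply]; exact hat_mul_of x

section hat
variable {G : Type*} [Group G] (x : G)
open MonoidAlgebra Finset

lemma gstar_hat : gstar (hatZ x) = hatZ x := by
  have hsum : gstar (hatZ x) =
      ∑ i ∈ Finset.range (orderOf x), MonoidAlgebra.single ((x ^ i)⁻¹) (1 : ℤ) := by
    unfold hatZ gstar
    rw [MonoidAlgebra.coeff_sum]
    show MonoidAlgebra.ofCoeff ((Finsupp.mapDomain.addMonoidHom (M := ℤ) (fun g : G => g⁻¹))
        (∑ i ∈ Finset.range (orderOf x), ((MonoidAlgebra.of ℤ G x) ^ i).coeff)) = _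
    rw [map_sum, MonoidAlgebra.ofCoeff_sum]
    refine Finset.sum_congr rfl fun i _ => ?_
    rw [← map_pow, MonoidAlgebra.of_apply]
    exact congrArg MonoidAlgebra.ofCoeff Finsupp.mapDomain_single
  rw [hsum]
  rcases Nat.eq_zero_or_pos (orderOf x) with h0 | hpos
  · simp [h0, hatZ]
  set N := orderOf x with hN
  have hval : ∀ i ∈ Finset.range N, (MonoidAlgebra.single ((x ^ i)⁻¹) (1:ℤ)) =
      MonoidAlgebra.single (x ^ ((N - i) % N)) (1:ℤ) := by
    intro i hi
    rw [Finset.mem_range] at hi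
    congr 1
    rw [hN, pow_mod_orderOf, ← hN]
    have : x ^ (N - i) * x ^ i = 1 := by
      rw [← pow_add, Nat.sub_add_cancel hi.le, hN, pow_orderOf_eq_one]
    exact (eq_inv_of_mul_eq_one_left this).symm
  rw [Finset.sum_congr rfl hval]
  have hhat : hatZ x = ∑ i ∈ Finset.range N, MonoidAlgebra.single (x ^ i) (1 : ℤ) := by
    unfold hatZ
    refine Finset.sum_congr rfl fun i _ => ?_
    rw [← map_pow, MonoidAlgebra.of_apply]
  rw [hhat]
  refine Finset.sum_nbij' (fun i => (N - i) % N) (fun i => (N - i) % N) ?_ ?_ ?_ ?_ ?_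
  · intro a ha; exact Finset.mem_range.mpr (Nat.mod_lt _ hpos)
  · intro a ha; exact Finset.mem_range.mpr (Nat.mod_lt _ hpos)
  · intro a ha; rw [Finset.mem_range] at ha
    show (N - (N - a) % N) % N = a
    rcases Nat.eq_zero_or_pos a with rfl | hap
    · simp [Nat.mod_self]
    · rw [Nat.mod_eq_of_lt (by omega : N - a < N)]
      have h2 : N - (N - a) = a := by omega
      rw [h2, Nat.mod_eq_of_lt ha]
  · intro a ha; rw [Finset.mem_range] at ha
    show (N - (N - a) % N) % N = a
    rcases Nat.eq_zero_or_pos a with rfl | hap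
    · simp [Nat.mod_self]
    · rw [Nat.mod_eq_of_lt (by omega : N - a < N)]
      have h2 : N - (N - a) = a := by omega
      rw [h2, Nat.mod_eq_of_lt ha]
  · intro a ha; rfl

lemma hat_apply (hx : IsOfFinOrder x) (g : G) :
    (hatZ x).coeff g = if g ∈ Subgroup.zpowers x then 1 else 0 := by
  classical
  have hhat : hatZ x = ∑ i ∈ Finset.range (orderOf x), MonoidAlgebra.single (x ^ i) (1 : ℤ) := by
    unfold hatZ
    refine Finset.sum_congr rfl fun i _ => ?_
    rw [← map_pow, MonoidAlgebra.of_apply]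
  rw [hhat, MonoidAlgebra.coeff_sum, Finsupp.finset_sum_apply]
  by_cases hg : g ∈ Subgroup.zpowers x
  · rw [if_pos hg]
    obtain ⟨m, hm⟩ := Subgroup.mem_zpowers_iff.mp hg
    have hNpos : 0 < orderOf x := hx.orderOf_pos
    have hNz : (orderOf x : ℤ) ≠ 0 := by exact_mod_cast hNpos.ne'
    have hm0 : 0 ≤ m % (orderOf x : ℤ) := Int.emod_nonneg m hNz
    have hmlt : m % (orderOf x : ℤ) < (orderOf x : ℤ) :=
      Int.emod_lt_of_pos m (by exact_mod_cast hNpos)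
    set k := (m % (orderOf x : ℤ)).toNat with hk
    have hkcast : (k : ℤ) = m % (orderOf x : ℤ) := Int.toNat_of_nonneg hm0
    have hklt : k < orderOf x := by omega
    have hxk : x ^ k = g := by
      rw [← hm, ← zpow_natCast, hkcast, zpow_mod_orderOf]
    have : ∀ i ∈ Finset.range (orderOf x),
        (MonoidAlgebra.single (x ^ i) (1:ℤ)).coeff g = if i = k then 1 else 0 := by
      intro i hi
      rw [Finset.mem_range] at hi
      rw [MonoidAlgebra.coeff_single, Finsupp.single_apply]
      congr 1
      simp only [eq_iff_iff]
      constructor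
      · intro h
        exact pow_injOn_Iio_orderOf (Set.mem_Iio.mpr hi) (Set.mem_Iio.mpr hklt)
          (show x ^ i = x ^ k by rw [h, hxk])
      · rintro rfl; exact hxk
    rw [Finset.sum_congr rfl this, Finset.sum_ite_eq' (Finset.range (orderOf x)) k fun _ => (1:ℤ),
      if_pos (Finset.mem_range.mpr hklt)]
  · rw [if_neg hg]
    refine Finset.sum_eq_zero fun i _ => ?_
    rw [MonoidAlgebra.coeff_single, Finsupp.single_apply, if_neg]
    intro h
    exact hg (h ▸ pow_mem (Subgroup.mem_zpowers x) i)

end hat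

open MonoidAlgebra

section key
variable {G : Type*} [Group G]

lemma natCast_mul_cancel {N : ℕ} (hN : N ≠ 0) {p q : MonoidAlgebra ℤ G}
    (h : (N : MonoidAlgebra ℤ G) * p = (N : MonoidAlgebra ℤ G) * q) : p = q := by
  have h' : MonoidAlgebra.single (1:G) (N:ℤ) * p = MonoidAlgebra.single (1:G) (N:ℤ) * q := by
    rw [← MonoidAlgebra.natCast_def]; exact h
  refine MonoidAlgebra.coeff_injective (Finsupp.ext fun g => ?_)
  have h5 := congrArg (fun f : MonoidAlgebra ℤ G => f.coeff g) h'
  simp only [MonoidAlgebra.coeff_single_mul_apply, inv_one, one_mul] at h5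
  exact mul_left_cancel₀ (by exact_mod_cast hN : (N:ℤ) ≠ 0) h5

lemma add_self_cancel {p q : MonoidAlgebra ℤ G} (h : p + p = q + q) : p = q := by
  refine MonoidAlgebra.coeff_injective (Finsupp.ext fun g => ?_)
  have h5 := congrArg (fun f : MonoidAlgebra ℤ G => f.coeff g) h
  have e1 : (p + p).coeff g = p.coeff g + p.coeff g := rfl
  have e2 : (q + q).coeff g = q.coeff g + q.coeff g := rfl
  rw [e1, e2] at h5
  omega

lemma keyE (H : Subgroup (MonoidAlgebra ℤ G)ˣ)
    (hH : ∀ u : (MonoidAlgebra ℤ G)ˣ, u ∈ H ↔ gstar (u : MonoidAlgebra ℤ G) = u)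
    (x y z : G) (hx : IsOfFinOrder x) (hz : y⁻¹ * x * y = z) :
    MonoidAlgebra.single y (1:ℤ) * ((1 - MonoidAlgebra.single z (1:ℤ)) *
        (hatZ x * ((2 - MonoidAlgebra.single z (1:ℤ) - MonoidAlgebra.single z⁻¹ (1:ℤ)) * hatZ x)))
      = (hatZ x * ((2 - MonoidAlgebra.single z (1:ℤ) - MonoidAlgebra.single z⁻¹ (1:ℤ)) * hatZ x)) *
        ((1 - MonoidAlgebra.single z⁻¹ (1:ℤ)) * MonoidAlgebra.single y⁻¹ (1:ℤ)) := by
  set h : MonoidAlgebra ℤ G := hatZ x with hh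
  set X : MonoidAlgebra ℤ G := MonoidAlgebra.single x (1:ℤ) with hXdef
  set Xi : MonoidAlgebra ℤ G := MonoidAlgebra.single x⁻¹ (1:ℤ) with hXidef
  set Y : MonoidAlgebra ℤ G := MonoidAlgebra.single y (1:ℤ) with hYdef
  set Yi : MonoidAlgebra ℤ G := MonoidAlgebra.single y⁻¹ (1:ℤ) with hYidef
  set Z : MonoidAlgebra ℤ G := MonoidAlgebra.single z (1:ℤ) with hZdef
  set Zi : MonoidAlgebra ℤ G := MonoidAlgebra.single z⁻¹ (1:ℤ) with hZidef
  set C2 : MonoidAlgebra ℤ G := 2 - Z - Zi with hC2def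
  set D : MonoidAlgebra ℤ G := h * (C2 * h) with hDdef
  have hX : h * X = h := hat_mul_X' x
  have h0 : h * (1 - X) = 0 := by rw [mul_sub, mul_one, hX, sub_self]
  set A : MonoidAlgebra ℤ G := (1 - X) * (Y * h) with hAdef
  set B : MonoidAlgebra ℤ G := (h * Yi) * (1 - Xi) with hBdef
  have hA : A * A = 0 := by
    have : A * A = (1 - X) * (Y * ((h * (1 - X)) * (Y * h))) := by
      rw [hAdef]; simp only [mul_assoc]
    rw [this, h0, zero_mul, mul_zero, mul_zero]
  have hBgstar : gstar A = B := by
    rw [hAdef, hBdef, hh, hXdef, hXidef, hYdef, hYidef]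
    rw [gstar_mul, gstar_mul, gstar_sub, gstar_one, gstar_single, gstar_single, gstar_hat]
  have hB : B * B = 0 := by
    rw [← hBgstar, ← gstar_mul, hA, gstar_zero]
  have hgB : gstar (1 + A) = 1 + B := by rw [gstar_add, gstar_one, hBgstar]
  have hgA : gstar (1 + B) = 1 + A := by
    rw [gstar_add, gstar_one, ← hBgstar, gstar_gstar]
  -- units
  have hu1 : (1 + A) * (1 - A) = 1 := by
    have e : (1 + A) * (1 - A) = 1 - A * A := by noncomm_ring
    rw [e, hA, sub_zero]
  have hu2 : (1 - A) * (1 + A) = 1 := by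
    have e : (1 - A) * (1 + A) = 1 - A * A := by noncomm_ring
    rw [e, hA, sub_zero]
  have hsu1 : (1 + B) * (1 - B) = 1 := by
    have e : (1 + B) * (1 - B) = 1 - B * B := by noncomm_ring
    rw [e, hB, sub_zero]
  have hsu2 : (1 - B) * (1 + B) = 1 := by
    have e : (1 - B) * (1 + B) = 1 - B * B := by noncomm_ring
    rw [e, hB, sub_zero]
  set u : (MonoidAlgebra ℤ G)ˣ := ⟨1 + A, 1 - A, hu1, hu2⟩ with hudef
  set su : (MonoidAlgebra ℤ G)ˣ := ⟨1 + B, 1 - B, hsu1, hsu2⟩ with hsudef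
  have hv : u * su ∈ H := by
    rw [hH]
    show gstar ((1 + A) * (1 + B)) = (1 + A) * (1 + B)
    rw [gstar_mul, hgA, hgB]
  have hw : su * u ∈ H := by
    rw [hH]
    show gstar ((1 + B) * (1 + A)) = (1 + B) * (1 + A)
    rw [gstar_mul, hgB, hgA]
  have hvw := H.mul_mem hv hw
  rw [hH] at hvw
  have hcomm : ((1 + B) * (1 + A)) * ((1 + A) * (1 + B)) =
      ((1 + A) * (1 + B)) * ((1 + B) * (1 + A)) := by
    have hval : ((u * su) * (su * u) : (MonoidAlgebra ℤ G)ˣ).val = ((1 + A) * (1 + B)) * ((1 + B) * (1 + A)) := rfl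
    rw [hval] at hvw
    rw [← hvw, gstar_mul, gstar_mul, gstar_mul, hgA, hgB]
  -- extract A(BA) = B(AB)
  have e1 : ((1 + A) * (1 + B)) * ((1 + B) * (1 + A)) =
      (1 + (A + A) + (B + B) + (A*B + A*B) + (B*A + B*A)) + (A*(B*A) + A*(B*A)) := by
    calc ((1 + A) * (1 + B)) * ((1 + B) * (1 + A))
        = (1 + A) * ((1 + (B + B) + B*B) * (1 + A)) := by noncomm_ring
      _ = (1 + A) * ((1 + (B + B) + 0) * (1 + A)) := by rw [hB]
      _ = ((1 + (A + A) + (B + B) + (A*B + A*B) + (B*A + B*A)) + A*A)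
            + (A*(B*A) + A*(B*A)) := by noncomm_ring
      _ = _ := by rw [hA, add_zero]
  have e2 : ((1 + B) * (1 + A)) * ((1 + A) * (1 + B)) =
      (1 + (A + A) + (B + B) + (A*B + A*B) + (B*A + B*A)) + (B*(A*B) + B*(A*B)) := by
    calc ((1 + B) * (1 + A)) * ((1 + A) * (1 + B))
        = (1 + B) * ((1 + (A + A) + A*A) * (1 + B)) := by noncomm_ring
      _ = (1 + B) * ((1 + (A + A) + 0) * (1 + B)) := by rw [hA]
      _ = ((1 + (A + A) + (B + B) + (A*B + A*B) + (B*A + B*A)) + B*B)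
            + (B*(A*B) + B*(A*B)) := by noncomm_ring
      _ = _ := by rw [hB, add_zero]
  rw [e1, e2] at hcomm
  have h4 : A * (B * A) = B * (A * B) := (add_self_cancel (add_left_cancel hcomm)).symm
  -- now compute BA and the two sides
  have htwo : (2 : MonoidAlgebra ℤ G) = MonoidAlgebra.single (1:G) (1:ℤ) + MonoidAlgebra.single (1:G) (1:ℤ) := by
    rw [← MonoidAlgebra.one_def]; exact (one_add_one_eq_two).symm
  have mid : Yi * ((1 - Xi) * ((1 - X) * Y)) = C2 := by
    rw [hYidef, hXidef, hXdef, hYdef, hC2def, hZdef, hZidef, htwo]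
    simp only [mul_sub, sub_mul, one_mul, mul_one, MonoidAlgebra.single_mul_single, mul_one]
    rw [show y⁻¹ * y = 1 by group]
    rw [show y⁻¹ * (x * y) = z by rw [← hz]; group]
    rw [show y⁻¹ * (x⁻¹ * y) = z⁻¹ by rw [← hz]; group]
    rw [show y⁻¹ * (x⁻¹ * (x * y)) = 1 by group]
    abel
  have hBA : B * A = D := by
    calc B * A = h * (Yi * ((1 - Xi) * ((1 - X) * (Y * h)))) := by
          rw [hAdef, hBdef]; simp only [mul_assoc]
      _ = (h * (Yi * ((1 - Xi) * ((1 - X) * Y)))) * h := by simp only [mul_assoc]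
      _ = D := by rw [mid, hDdef, mul_assoc]
  have hcast : ∀ p q : MonoidAlgebra ℤ G, p * (((orderOf x : ℕ) : MonoidAlgebra ℤ G) * q) = ((orderOf x : ℕ) : MonoidAlgebra ℤ G) * (p * q) := by
    intro p q
    rw [← mul_assoc, (Nat.cast_commute (orderOf x) p).symm.eq, mul_assoc]
  have hhD : h * D = ((orderOf x : ℕ) : MonoidAlgebra ℤ G) * D := by
    rw [hDdef, ← mul_assoc, hat_mul_hat, mul_assoc]
  have hDh : D * h = ((orderOf x : ℕ) : MonoidAlgebra ℤ G) * D := by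
    calc D * h = h * (C2 * (h * h)) := by rw [hDdef]; simp only [mul_assoc]
      _ = h * (C2 * (((orderOf x : ℕ) : MonoidAlgebra ℤ G) * h)) := by rw [hat_mul_hat]
      _ = ((orderOf x : ℕ) : MonoidAlgebra ℤ G) * (h * (C2 * h)) := by rw [hcast, hcast]
      _ = ((orderOf x : ℕ) : MonoidAlgebra ℤ G) * D := by rw [hDdef]
  have hXY : (1 - X) * Y = Y * (1 - Z) := by
    rw [hXdef, hYdef, hZdef, sub_mul, one_mul, mul_sub, mul_one,
      MonoidAlgebra.single_mul_single, MonoidAlgebra.single_mul_single, mul_one,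
      show y * z = x * y by rw [← hz]; group]
  have hYiXi : Yi * (1 - Xi) = (1 - Zi) * Yi := by
    rw [hYidef, hXidef, hZidef, sub_mul, one_mul, mul_sub, mul_one,
      MonoidAlgebra.single_mul_single, MonoidAlgebra.single_mul_single, mul_one,
      show z⁻¹ * y⁻¹ = y⁻¹ * x⁻¹ by rw [← hz]; group]
  have hABA : A * (B * A) = ((orderOf x : ℕ) : MonoidAlgebra ℤ G) * (Y * ((1 - Z) * D)) := by
    calc A * (B * A) = A * D := by rw [hBA]
      _ = (1 - X) * (Y * (h * D)) := by rw [hAdef]; simp only [mul_assoc]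
      _ = (1 - X) * (Y * (((orderOf x : ℕ) : MonoidAlgebra ℤ G) * D)) := by rw [hhD]
      _ = ((orderOf x : ℕ) : MonoidAlgebra ℤ G) * ((1 - X) * (Y * D)) := by rw [hcast, hcast]
      _ = ((orderOf x : ℕ) : MonoidAlgebra ℤ G) * (Y * ((1 - Z) * D)) := by
          rw [show (1 - X) * (Y * D) = ((1 - X) * Y) * D from (mul_assoc _ _ _).symm, hXY,
            mul_assoc]
  have hBAB : B * (A * B) = ((orderOf x : ℕ) : MonoidAlgebra ℤ G) * (D * ((1 - Zi) * Yi)) := by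
    have hBAB0 : B * (A * B) = (B * A) * B := (mul_assoc B A B).symm
    calc B * (A * B) = D * B := by rw [hBAB0, hBA]
      _ = (D * h) * (Yi * (1 - Xi)) := by rw [hBdef]; simp only [mul_assoc]
      _ = (((orderOf x : ℕ) : MonoidAlgebra ℤ G) * D) * (Yi * (1 - Xi)) := by rw [hDh]
      _ = ((orderOf x : ℕ) : MonoidAlgebra ℤ G) * (D * ((1 - Zi) * Yi)) := by rw [hYiXi, mul_assoc]
  have h5 : ((orderOf x : ℕ) : MonoidAlgebra ℤ G) * (Y * ((1 - Z) * D)) = ((orderOf x : ℕ) : MonoidAlgebra ℤ G) * (D * ((1 - Zi) * Yi)) := by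
    rw [← hABA, ← hBAB, h4]
  have hNne : orderOf x ≠ 0 := hx.orderOf_pos.ne'
  exact natCast_mul_cancel hNne h5

end key

/-- If the symmetric units of ℤG form a subgroup, then every finite cyclic subgroup
of G is normal in G. -/
theorem stmt_11 {G : Type*} [Group G]
    (H : Subgroup (MonoidAlgebra ℤ G)ˣ)
    (hH : ∀ u : (MonoidAlgebra ℤ G)ˣ, u ∈ H ↔ gstar (u : MonoidAlgebra ℤ G) = u) :
    ∀ x : G, IsOfFinOrder x → (Subgroup.zpowers x).Normal := by
  intro x hx
  constructor
  intro n hn g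
  suffices hconj : ∀ w : G, w * x * w⁻¹ ∈ Subgroup.zpowers x by
    obtain ⟨m, hm⟩ := Subgroup.mem_zpowers_iff.mp hn
    have h2 : g * n * g⁻¹ = (g * x * g⁻¹) ^ m := by
      rw [← hm, ← MulAut.conj_apply, map_zpow, MulAut.conj_apply]
    rw [h2]
    exact Subgroup.zpow_mem _ (hconj g) m
  intro w
  by_contra hg
  set z := w * x * w⁻¹ with hzdef
  have hz1 : (w⁻¹)⁻¹ * x * w⁻¹ = z := by rw [hzdef]; group
  have hz2 : (x * w⁻¹)⁻¹ * x * (x * w⁻¹) = z := by rw [hzdef]; group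
  have E1 := keyE H hH x w⁻¹ z hx hz1
  have E2 := keyE H hH x (x * w⁻¹) z hx hz2
  set h : MonoidAlgebra ℤ G := hatZ x with hh
  set X : MonoidAlgebra ℤ G := MonoidAlgebra.single x (1:ℤ) with hXdef
  set Xi : MonoidAlgebra ℤ G := MonoidAlgebra.single x⁻¹ (1:ℤ) with hXidef
  set Y : MonoidAlgebra ℤ G := MonoidAlgebra.single w⁻¹ (1:ℤ) with hYdef
  set Yi : MonoidAlgebra ℤ G := MonoidAlgebra.single (w⁻¹)⁻¹ (1:ℤ) with hYidef
  set Z : MonoidAlgebra ℤ G := MonoidAlgebra.single z (1:ℤ) with hZdef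
  set Zi : MonoidAlgebra ℤ G := MonoidAlgebra.single z⁻¹ (1:ℤ) with hZidef
  set C2 : MonoidAlgebra ℤ G := 2 - Z - Zi with hC2def
  set D : MonoidAlgebra ℤ G := h * (C2 * h) with hDdef
  set F : MonoidAlgebra ℤ G := (1 - Z) * D with hFdef
  -- E1 : Y * F = D * ((1 - Zi) * Yi), E2 : single (x*w⁻¹) 1 * F = D * ((1-Zi) * single (x*w⁻¹)⁻¹ 1)
  have hsx : X * Y = MonoidAlgebra.single (x * w⁻¹) (1:ℤ) := by
    rw [hXdef, hYdef, MonoidAlgebra.single_mul_single, one_mul]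
  have hsxi : Yi * Xi = MonoidAlgebra.single (x * w⁻¹)⁻¹ (1:ℤ) := by
    rw [hYidef, hXidef, MonoidAlgebra.single_mul_single, one_mul]
    congr 1
    group
  rw [← hsx, ← hsxi] at E2
  have E2' : X * (Y * F) = (D * ((1 - Zi) * Yi)) * Xi := by
    calc X * (Y * F) = (X * Y) * F := (mul_assoc X Y F).symm
      _ = D * ((1 - Zi) * (Yi * Xi)) := E2
      _ = (D * ((1 - Zi) * Yi)) * Xi := by simp only [mul_assoc]
  rw [← E1] at E2'
  -- E2' : X * (Y * F) = (Y * F) * Xi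
  have hFX : F * X = F := by
    calc F * X = (1 - Z) * (h * (C2 * (h * X))) := by rw [hFdef, hDdef]; simp only [mul_assoc]
      _ = F := by rw [hh, hXdef, hat_mul_X', ← hh, ← hDdef, ← hFdef]
  have hXiX : Xi * X = 1 := by
    rw [hXidef, hXdef, MonoidAlgebra.single_mul_single, one_mul, inv_mul_cancel,
      ← MonoidAlgebra.one_def]
  have hXYF : X * (Y * F) = Y * F := by
    have h6 := congrArg (· * X) E2'
    simp only [mul_assoc] at h6
    rw [hFX, hXiX, mul_one] at h6
    exact h6
  have hXY : X * Y = Y * Z := by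
    rw [hsx, hYdef, hZdef, MonoidAlgebra.single_mul_single, one_mul]
    congr 1
    rw [hzdef]; group
  have hYiY : Yi * Y = 1 := by
    rw [hYidef, hYdef, MonoidAlgebra.single_mul_single, one_mul, inv_mul_cancel,
      ← MonoidAlgebra.one_def]
  have hZF : Z * F = F := by
    have h7 : (Y * Z) * F = Y * F := by rw [← hXY]; rw [mul_assoc]; exact hXYF
    have h8 := congrArg (Yi * ·) h7
    simp only [mul_assoc] at h8
    rw [← mul_assoc Yi Y, hYiY, one_mul, ← mul_assoc Yi Y, hYiY, one_mul] at h8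
    exact h8
  -- pointwise computation
  have hNpos : 0 < orderOf x := hx.orderOf_pos
  have hzP : z ∉ Subgroup.zpowers x := hg
  have hziP : z⁻¹ ∉ Subgroup.zpowers x := fun hmem => hzP (by simpa using inv_mem hmem)
  have hval : ∀ g : G, h.coeff g = if g ∈ Subgroup.zpowers x then 1 else 0 := fun g =>
    hat_apply x hx g
  have hval0 : ∀ g ∉ Subgroup.zpowers x, h.coeff g = 0 := by
    intro g hgm; rw [hval g, if_neg hgm]
  have hval1 : ∀ g ∈ Subgroup.zpowers x, h.coeff g = 1 := by
    intro g hgm; rw [hval g, if_pos hgm]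
  have hvalnonneg : ∀ g : G, 0 ≤ h.coeff g := by
    intro g; rw [hval g]; split <;> norm_num
  have hvalle : ∀ g : G, h.coeff g ≤ 1 := by
    intro g; rw [hval g]; split <;> norm_num
  have htwo : (2 : MonoidAlgebra ℤ G) = MonoidAlgebra.single (1:G) (1:ℤ) +
      MonoidAlgebra.single (1:G) (1:ℤ) := by
    rw [← MonoidAlgebra.one_def]; exact one_add_one_eq_two.symm
  have hCh : ∀ g' : G, (C2 * h).coeff g' = h.coeff g' + h.coeff g' - h.coeff (z⁻¹ * g') - h.coeff (z * g') := by
    intro g'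
    have e : C2 * h = MonoidAlgebra.single (1:G) (1:ℤ) * h + MonoidAlgebra.single (1:G) (1:ℤ) * h
        - Z * h - Zi * h := by
      rw [hC2def, htwo, sub_mul, sub_mul, add_mul]
    rw [e]
    have e2 : (MonoidAlgebra.single (1:G) (1:ℤ) * h + MonoidAlgebra.single (1:G) (1:ℤ) * h
        - Z * h - Zi * h).coeff g' = (MonoidAlgebra.single (1:G) (1:ℤ) * h).coeff g'
        + (MonoidAlgebra.single (1:G) (1:ℤ) * h).coeff g' - (Z * h).coeff g' - (Zi * h).coeff g' := rfl
    rw [e2, hZdef, hZidef, MonoidAlgebra.coeff_single_mul_apply, MonoidAlgebra.coeff_single_mul_apply,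
      MonoidAlgebra.coeff_single_mul_apply, inv_one, one_mul, one_mul, one_mul, one_mul, inv_inv]
  have hDapp : ∀ g' : G, D.coeff g' = ∑ i ∈ Finset.range (orderOf x), (C2 * h).coeff ((x ^ i)⁻¹ * g') := by
    intro g'
    rw [hDdef]
    nth_rewrite 1 [hh, hat_eq_sum_single x, Finset.sum_mul]
    rw [MonoidAlgebra.coeff_sum, Finsupp.finset_sum_apply]
    refine Finset.sum_congr rfl fun i _ => ?_
    rw [MonoidAlgebra.coeff_single_mul_apply, one_mul]
  have hmulnotL : ∀ c : G, c ∉ Subgroup.zpowers x → ∀ a ∈ Subgroup.zpowers x,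
      c * a ∉ Subgroup.zpowers x := by
    intro c hc a ha hmem
    refine hc ?_
    have h9 := mul_mem hmem (inv_mem ha)
    simpa [mul_assoc] using h9
  have hmulnotR : ∀ c : G, c ∉ Subgroup.zpowers x → ∀ a ∈ Subgroup.zpowers x,
      a * c ∉ Subgroup.zpowers x := by
    intro c hc a ha hmem
    refine hc ?_
    have h9 := mul_mem (inv_mem ha) hmem
    simpa [← mul_assoc] using h9
  have hD1 : D.coeff 1 = 2 * (orderOf x : ℤ) := by
    rw [hDapp 1]
    have hterm : ∀ i ∈ Finset.range (orderOf x), (C2 * h).coeff ((x ^ i)⁻¹ * 1) = 2 := by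
      intro i _
      rw [mul_one, hCh]
      have m1 : (x ^ i)⁻¹ ∈ Subgroup.zpowers x := inv_mem (pow_mem (Subgroup.mem_zpowers x) i)
      rw [hval1 _ m1, hval0 _ (hmulnotL z⁻¹ hziP _ m1), hval0 _ (hmulnotL z hzP _ m1)]
      norm_num
    rw [Finset.sum_congr rfl hterm, Finset.sum_const, Finset.card_range, nsmul_eq_mul, mul_comm]
  have hDz : D.coeff z⁻¹ ≤ 0 := by
    rw [hDapp z⁻¹]
    refine Finset.sum_nonpos fun i _ => ?_
    rw [hCh]
    have m1 : (x ^ i)⁻¹ ∈ Subgroup.zpowers x := inv_mem (pow_mem (Subgroup.mem_zpowers x) i)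
    rw [hval0 _ (hmulnotR z⁻¹ hziP _ m1)]
    have b1 := hvalnonneg (z⁻¹ * ((x ^ i)⁻¹ * z⁻¹))
    have b2 := hvalnonneg (z * ((x ^ i)⁻¹ * z⁻¹))
    linarith
  have hDzz : 1 - 2 * (orderOf x : ℤ) ≤ D.coeff (z⁻¹ * z⁻¹) := by
    rw [hDapp (z⁻¹ * z⁻¹)]
    have hbound : ∀ i ∈ Finset.range (orderOf x),
        (if i = 0 then (-1:ℤ) else -2) ≤ (C2 * h).coeff ((x ^ i)⁻¹ * (z⁻¹ * z⁻¹)) := by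
      intro i _
      rw [hCh]
      by_cases hi0 : i = 0
      · subst hi0
        rw [if_pos rfl]
        simp only [pow_zero, inv_one, one_mul]
        rw [show z * (z⁻¹ * z⁻¹) = z⁻¹ by group, hval0 _ hziP]
        have b1 := hvalnonneg (z⁻¹ * z⁻¹)
        have b2 := hvalle (z⁻¹ * (z⁻¹ * z⁻¹))
        have b3 := hvalnonneg (z⁻¹ * (z⁻¹ * z⁻¹))
        linarith
      · rw [if_neg hi0]
        have b1 := hvalnonneg ((x ^ i)⁻¹ * (z⁻¹ * z⁻¹))
        have b2 := hvalle (z⁻¹ * ((x ^ i)⁻¹ * (z⁻¹ * z⁻¹)))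
        have b3 := hvalnonneg (z⁻¹ * ((x ^ i)⁻¹ * (z⁻¹ * z⁻¹)))
        have b4 := hvalle (z * ((x ^ i)⁻¹ * (z⁻¹ * z⁻¹)))
        have b5 := hvalnonneg (z * ((x ^ i)⁻¹ * (z⁻¹ * z⁻¹)))
        linarith
    have hs := Finset.sum_le_sum hbound
    have hsum0 : ∑ i ∈ Finset.range (orderOf x), (if i = 0 then (-1:ℤ) else -2)
        = 1 - 2 * (orderOf x : ℤ) := by
      have e3 : ∀ i, (if i = 0 then (-1:ℤ) else -2) = (if i = 0 then (1:ℤ) else 0) + (-2) := by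
        intro i; split <;> ring
      rw [Finset.sum_congr rfl (fun i _ => e3 i), Finset.sum_add_distrib,
        Finset.sum_ite_eq' (Finset.range (orderOf x)) 0 (fun _ => (1:ℤ)),
        if_pos (Finset.mem_range.mpr hNpos), Finset.sum_const, Finset.card_range, nsmul_eq_mul]
      ring
    rw [hsum0] at hs
    exact hs
  have hFapp : ∀ g' : G, F.coeff g' = D.coeff g' - D.coeff (z⁻¹ * g') := by
    intro g'
    have e : F = D - Z * D := by rw [hFdef, sub_mul, one_mul]
    have e2 : (D - Z * D).coeff g' = D.coeff g' - (Z * D).coeff g' := rfl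
    rw [e, e2, hZdef, MonoidAlgebra.coeff_single_mul_apply, one_mul]
  have e0 : F.coeff z⁻¹ = F.coeff 1 := by
    have e1' : (Z * F).coeff 1 = F.coeff 1 := congrArg (fun f : MonoidAlgebra ℤ G => f.coeff 1) hZF
    rw [hZdef, MonoidAlgebra.coeff_single_mul_apply, one_mul, mul_one] at e1'
    exact e1'
  have efinal : D.coeff z⁻¹ - D.coeff (z⁻¹ * z⁻¹) = D.coeff 1 - D.coeff z⁻¹ := by
    have e5 := e0
    rw [hFapp z⁻¹, hFapp 1, mul_one] at e5
    exact e5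
  have hN1 : (1:ℤ) ≤ (orderOf x : ℤ) := by exact_mod_cast hNpos
  linarith
end
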